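/- (Recovery sequence for the rescaled dissipation distance.) Let R and D be as in the dissipation assumptions. For all deviatoric matrices z, ẑ ∈ ℝ^{d×d}_dev, setting ẑ_ε := (exp(ε(ẑ−z))(I+εz) − I)/ε, one has ẑ_ε → ẑ as ε → 0 and limsup_{ε→0} ε⁻¹D(I+εz, I+εẑ_ε) ≤ R(ẑ−z). Consequently D_ε Γ-converges to D₀ on ℝ^{d×d}×ℝ^{d×d}, where D_ε(z₁,z₂) := ε⁻¹D(I+εz₁,I+εz₂) and D₀(z₁,z₂) := R(z₂−z₁). -/

import Mathlib

open MeasureTheory Matrix Filter Set Metric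
open scoped BigOperators ENNReal NNReal Topology RealInnerProductSpace

noncomputable section

namespace LinPlast

/-- Euclidean space `ℝ^d`. -/
abbrev E (d : ℕ) := EuclideanSpace ℝ (Fin d)

/-- Square `d×d` real matrices. -/
abbrev Mat (d : ℕ) := Matrix (Fin d) (Fin d) ℝ

attribute [local instance] Matrix.frobeniusNormedAddCommGroup Matrix.frobeniusNormedSpace

variable {d : ℕ}

/-- Frobenius inner product `A : B`. -/
def matInner (A B : Mat d) : ℝ := ∑ i, ∑ j, A i j * B i j

/-- Fourth order tensors. -/
abbrev Tens (d : ℕ) := Fin d → Fin d → Fin d → Fin d → ℝ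

/-- Application of a 4-tensor to a matrix, `(𝕋A)_{ij} = ∑_{kl} 𝕋_{ijkl} A_{kl}`. -/
def tApp (T : Tens d) (A : Mat d) : Mat d := Matrix.of fun i j => ∑ k, ∑ l, T i j k l * A k l

/-- The quadratic form `|A|²_𝕋 := ½ A : 𝕋A`. -/
def qForm (T : Tens d) (A : Mat d) : ℝ := (1 / 2) * matInner A (tApp T A)

/-- A symmetric (`𝕋_{ijkl} = 𝕋_{klij}`) positive semidefinite 4-tensor. -/
structure IsGoodTens (T : Tens d) : Prop where
  symm : ∀ i j k l, T i j k l = T k l i j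
  psd : ∀ A : Mat d, 0 ≤ matInner A (tApp T A)

/-- `SL(d)`: matrices of determinant one.-/
def SLg (d : ℕ) : Set (Mat d) := {P | P.det = 1}

/-- `SO(d)`: rotations. -/
def SOg (d : ℕ) : Set (Mat d) := {R | R.det = 1 ∧ Rᵀ * R = 1 ∧ R * Rᵀ = 1}

/-- `GL₊(d)`: matrices of positive determinant. -/
def GLp (d : ℕ) : Set (Mat d) := {F | 0 < F.det}

/-- Deviatoric (symmetric and trace-free) matrices. -/
def Dev (d : ℕ) : Set (Mat d) := {A | Aᵀ = A ∧ A.trace = 0}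

/-- Symmetric part of a matrix. -/
def msym (A : Mat d) : Mat d := (2⁻¹ : ℝ) • (A + Aᵀ)

/-- Matrix exponential. -/
def mexp (A : Mat d) : Mat d := NormedSpace.exp A

/-- The dissipation-potential assumptions: `R^dev` is nonnegative, convex, positively
1-homogeneous and comparable to the norm on the deviatoric matrices. -/
structure DissAss (d : ℕ) (Rdev : Mat d → ℝ) (c₄ c₅ : ℝ) : Prop where
  c4pos : 0 < c₄
  c5pos : 0 < c₅
  nonneg : ∀ P ∈ Dev d, 0 ≤ Rdev P
  convexOn : ConvexOn ℝ (Dev d) Rdev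
  hom : ∀ a : ℝ, 0 ≤ a → ∀ P ∈ Dev d, Rdev (a • P) = a * Rdev P
  lb : ∀ P ∈ Dev d, c₄ * ‖P‖ ≤ Rdev P
  ub : ∀ P ∈ Dev d, Rdev P ≤ c₅ * ‖P‖

-- The extended dissipation potential `R`, equal to `R^dev` on deviatoric matrices and
-- `∞` otherwise (with values in `[0,∞]`).
open scoped Classical in
def Rext (Rdev : Mat d → ℝ) (P : Mat d) : ℝ≥0∞ :=
  if P ∈ Dev d then ENNReal.ofReal (Rdev P) else ⊤

/-- The dissipation distance `D(I,P̂)`: infimum of `∫₀¹ R(Ṗ P⁻¹) dt` over `C¹` paths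
from `I` to `P̂`. -/
def DistI (Rdev : Mat d → ℝ) (Phat : Mat d) : ℝ≥0∞ :=
  ⨅ (P : ℝ → Mat d) (_ : ContDiff ℝ 1 P) (_ : P 0 = 1) (_ : P 1 = Phat),
    ∫⁻ t in Set.Icc (0 : ℝ) 1, Rext Rdev (deriv P t * (P t)⁻¹)

/-- The dissipation distance `D(P,P̂) = D(I, P̂ P⁻¹)` (equal to `∞` if `P` is not
invertible, since then `P⁻¹ = 0` and no admissible finite-cost path exists). -/
def DistD (Rdev : Mat d → ℝ) (P Phat : Mat d) : ℝ≥0∞ := DistI Rdev (Phat * P⁻¹)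

/-- The gradient `∇u(x)` of a vector field, as a matrix: `(∇u)_{ij} = ∂_j u_i`. -/
def grad (u : E d → E d) (x : E d) : Mat d :=
  Matrix.of fun i j => fderiv ℝ u x (EuclideanSpace.single j 1) i

/-- Membership in `H¹(Ω;ℝ^d)`: differentiable on `Ω`, with the function and its gradient
square integrable on `Ω`. -/
structure MemH1 (Ω : Set (E d)) (u : E d → E d) : Prop where
  diff : ∀ x ∈ Ω, DifferentiableAt ℝ u x
  l2 : MemLp u 2 (volume.restrict Ω)
  gradl2 : MemLp (grad u) 2 (volume.restrict Ω)

/-- The space `U = {u ∈ H¹(Ω;ℝ^d) : u = 0 on Γ}`. -/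
def memU (Ω Γ : Set (E d)) (u : E d → E d) : Prop :=
  MemH1 Ω u ∧ ∀ x ∈ Γ, u x = 0

/-- The space `Z = L²(Ω;ℝ^{d×d})`. -/
def memZ (Ω : Set (E d)) (z : E d → Mat d) : Prop :=
  MemLp z 2 (volume.restrict Ω)

/-- Membership in the state space `Q = U × Z`. -/
def memQ (Ω Γ : Set (E d)) (u : E d → E d) (z : E d → Mat d) : Prop :=
  memU Ω Γ u ∧ memZ Ω z

/-- Weak convergence in `L²(Ω;ℝ^{d×d})`. -/
def WeakL2Mat (Ω : Set (E d)) (z : ℕ → E d → Mat d) (z₀ : E d → Mat d) : Prop :=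
  ∀ g : E d → Mat d, MemLp g 2 (volume.restrict Ω) →
    Tendsto (fun n => ∫ x in Ω, matInner (z n x) (g x)) atTop
      (𝓝 (∫ x in Ω, matInner (z₀ x) (g x)))

/-- Weak convergence in `L²(Ω;ℝ^d)`. -/
def WeakL2Vec (Ω : Set (E d)) (u : ℕ → E d → E d) (u₀ : E d → E d) : Prop :=
  ∀ g : E d → E d, MemLp g 2 (volume.restrict Ω) →
    Tendsto (fun n => ∫ x in Ω, ⟪u n x, g x⟫) atTop (𝓝 (∫ x in Ω, ⟪u₀ x, g x⟫))

/-- Weak convergence in `H¹(Ω;ℝ^d)`. -/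
def WeakH1 (Ω : Set (E d)) (u : ℕ → E d → E d) (u₀ : E d → E d) : Prop :=
  WeakL2Vec Ω u u₀ ∧ WeakL2Mat Ω (fun n => grad (u n)) (grad u₀)

/-- Weak convergence in `Q = U × Z`. -/
def WeakQ (Ω : Set (E d)) (u : ℕ → E d → E d) (z : ℕ → E d → Mat d)
    (u₀ : E d → E d) (z₀ : E d → Mat d) : Prop :=
  WeakH1 Ω u u₀ ∧ WeakL2Mat Ω z z₀

/-- A bounded open connected set with Lipschitz boundary: near every boundary point,
after choosing a unit direction `v`, the set is the open hypograph of a Lipschitz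
function over the hyperplane orthogonal to `v`. -/
structure IsLipschitzDomain (Ω : Set (E d)) : Prop where
  open' : IsOpen Ω
  bounded : Bornology.IsBounded Ω
  connected : IsConnected Ω
  lipBoundary : ∀ x ∈ frontier Ω, ∃ r > (0 : ℝ), ∃ v : E d, ‖v‖ = 1 ∧
    ∃ L : ℝ≥0, ∃ φ : E d → ℝ, LipschitzWith L φ ∧
      ∀ y ∈ Metric.ball x r, (y ∈ Ω ↔ ⟪y, v⟫ < φ (y - ⟪y, v⟫ • v))

/-- The Dirichlet boundary part `Γ`: a relatively open subset of `∂Ω` with positive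
`(d-1)`-dimensional Hausdorff measure. -/
structure IsDirichletPart (Ω Γ : Set (E d)) : Prop where
  sub : Γ ⊆ frontier Ω
  relOpen : ∃ V : Set (E d), IsOpen V ∧ Γ = V ∩ frontier Ω
  posMeas : 0 < μH[(d : ℝ) - 1] Γ

/-- The matrix of first derivatives `∂_F W(F)` of a real function of a matrix. -/
def matGrad (W : Mat d → ℝ) (F : Mat d) : Mat d :=
  Matrix.of fun i j => fderiv ℝ W F (Matrix.single i j 1)

/-- The assumptions on the elastic energy density `W_el : ℝ^{d×d} → [0,∞]`:
finite and `C¹` on `GL₊(d)` and `≡ ∞` outside; frame indifference; nondegeneracy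
`W_el(F) ≥ c₁ dist²(F,SO(d))`; control of the Mandel tensor `Fᵀ ∂_F W_el(F)`;
and quadratic expansion `|·|²_ℂ` around the identity. -/
structure ElAss (d : ℕ) (Wel : Mat d → ℝ≥0∞) (c₁ c₂ c₃ : ℝ) (Cten : Tens d) : Prop where
  c1pos : 0 < c₁
  c2pos : 0 < c₂
  finiteOn : ∀ F ∈ GLp d, Wel F ≠ ⊤
  eqTopOff : ∀ F ∉ GLp d, Wel F = ⊤
  smooth : ContDiffOn ℝ 1 (fun F => (Wel F).toReal) (GLp d)
  frame : ∀ R ∈ SOg d, ∀ F ∈ GLp d, Wel (R * F) = Wel F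
  lowerBound : ∀ F ∈ GLp d,
    ENNReal.ofReal (c₁ * (Metric.infDist F (SOg d)) ^ 2) ≤ Wel F
  mandel : ∀ F ∈ GLp d,
    ‖Fᵀ * matGrad (fun G => (Wel G).toReal) F‖ ≤ c₂ * ((Wel F).toReal + c₃)
  tens : IsGoodTens Cten
  quadExp : ∀ δ > (0 : ℝ), ∃ cδ > (0 : ℝ), ∀ A : Mat d, ‖A‖ < cδ →
    Wel (1 + A) ≠ ⊤ ∧ |(Wel (1 + A)).toReal - qForm Cten A| ≤ δ * qForm Cten A

/-- The assumptions on the hardening energy density `W_h`: it coincides with a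
locally Lipschitz, quadratically expandable `W̃_h` on a compact `K ⊆ SL(d)` containing
a relative neighborhood of `I`, is `≡ ∞` outside `K`, and is coercive. -/
structure HardAss (d : ℕ) (Wh : Mat d → ℝ≥0∞) (Wth : Mat d → ℝ) (K : Set (Mat d))
    (c₃ : ℝ) (Hten : Tens d) : Prop where
  c3pos : 0 < c₃
  eqOn : ∀ P ∈ K, Wh P = ENNReal.ofReal (Wth P)
  eqTopOff : ∀ P ∉ K, Wh P = ⊤
  nonneg : ∀ P ∈ K, 0 ≤ Wth P
  compact : IsCompact K
  subSL : K ⊆ SLg d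
  nbhdI : ∃ ρ > (0 : ℝ), {P ∈ SLg d | ‖P - 1‖ < ρ} ⊆ K
  locLip : LocallyLipschitz Wth
  tens : IsGoodTens Hten
  quadExp : ∀ δ > (0 : ℝ), ∃ cδ > (0 : ℝ), ∀ A : Mat d, ‖A‖ < cδ →
    |Wth (1 + A) - qForm Hten A| ≤ δ * qForm Hten A
  coercive : ∀ A : Mat d, ENNReal.ofReal (c₃ * ‖A‖ ^ 2) ≤ Wh (1 + A)

/-- The rescaled finite-plasticity stored energy
`W_ε(u,z) = ε⁻² ∫_Ω W_el((I+ε∇u)(I+εz)⁻¹) dx + ε⁻² ∫_Ω W_h(I+εz) dx`. -/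
def Weps (Ω : Set (E d)) (Wel Wh : Mat d → ℝ≥0∞) (ε : ℝ)
    (u : E d → E d) (z : E d → Mat d) : ℝ≥0∞ :=
  ENNReal.ofReal (ε⁻¹) ^ 2 *
    ((∫⁻ x in Ω, Wel ((1 + ε • grad u x) * (1 + ε • z x)⁻¹)) +
      ∫⁻ x in Ω, Wh (1 + ε • z x))

/-- The linearized stored energy `W₀(u,z) = ∫_Ω |∇u^sym − z^sym|²_ℂ + ∫_Ω |z|²_ℍ`. -/
def W0 (Ω : Set (E d)) (Cten Hten : Tens d)
    (u : E d → E d) (z : E d → Mat d) : ℝ≥0∞ :=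
  (∫⁻ x in Ω, ENNReal.ofReal (qForm Cten (msym (grad u x) - msym (z x)))) +
    ∫⁻ x in Ω, ENNReal.ofReal (qForm Hten (z x))

/-- A generalized loading `ℓ ∈ W^{1,1}(0,T;U')`, described by its values and its time
derivative `ℓ'`: both are linear in `u`, `ℓ` is the integral of `ℓ'`, and `ℓ(t)`, `ℓ'(t)`
are bounded by `g(t)` times the `H¹(Ω)`-norm, with `g ∈ L¹(0,T)`. -/
structure Loading (Ω : Set (E d)) (T : ℝ) (ℓ ℓ' : ℝ → (E d → E d) → ℝ) : Prop where
  lin : ∀ t ∈ Icc (0 : ℝ) T, IsLinearMap ℝ (ℓ t) ∧ IsLinearMap ℝ (ℓ' t)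
  fund : ∀ u : E d → E d, ∀ t ∈ Icc (0 : ℝ) T,
    (IntervalIntegrable (fun s => ℓ' s u) volume 0 t) ∧
    ℓ t u = ℓ 0 u + ∫ s in (0 : ℝ)..t, ℓ' s u
  bound : ∃ g : ℝ → ℝ, IntegrableOn g (Icc (0 : ℝ) T) ∧
    ∀ t ∈ Icc (0 : ℝ) T, ∀ u : E d → E d,
      |ℓ t u| ≤ g t * Real.sqrt ((∫ x in Ω, ‖u x‖ ^ 2) + ∫ x in Ω, ‖grad u x‖ ^ 2) ∧
      |ℓ' t u| ≤ g t * Real.sqrt ((∫ x in Ω, ‖u x‖ ^ 2) + ∫ x in Ω, ‖grad u x‖ ^ 2)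

/-- Total energy `E_ε(t,u,z) = W_ε(u,z) − ⟨ℓ(t),u⟩`, with values in `(-∞,∞]`. -/
def Eeps (Ω : Set (E d)) (Wel Wh : Mat d → ℝ≥0∞) (ℓ : ℝ → (E d → E d) → ℝ)
    (ε t : ℝ) (u : E d → E d) (z : E d → Mat d) : EReal :=
  (Weps Ω Wel Wh ε u z : EReal) - ((ℓ t u : ℝ) : EReal)

/-- Linearized total energy `E₀(t,u,z) = W₀(u,z) − ⟨ℓ(t),u⟩`. -/
def E0 (Ω : Set (E d)) (Cten Hten : Tens d)
    (ℓ : ℝ → (E d → E d) → ℝ) (t : ℝ) (u : E d → E d) (z : E d → Mat d) : EReal :=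
  (W0 Ω Cten Hten u z : EReal) - ((ℓ t u : ℝ) : EReal)

/-- The rescaled dissipation functional `𝒟_ε(z₁,z₂) = ε⁻¹ ∫_Ω D(I+εz₁, I+εz₂) dx`. -/
def Deps (Ω : Set (E d)) (Rdev : Mat d → ℝ) (ε : ℝ)
    (z₁ z₂ : E d → Mat d) : ℝ≥0∞ :=
  ENNReal.ofReal (ε⁻¹) * ∫⁻ x in Ω, DistD Rdev (1 + ε • z₁ x) (1 + ε • z₂ x)

/-- The linearized dissipation functional `𝒟₀(z₁,z₂) = ∫_Ω R(z₂ − z₁) dx`. -/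
def D0 (Ω : Set (E d)) (Rdev : Mat d → ℝ) (z₁ z₂ : E d → Mat d) : ℝ≥0∞ :=
  ∫⁻ x in Ω, Rext Rdev (z₂ x - z₁ x)

/-- The total dissipation `Diss_𝒟(z;[0,t])`: supremum over all partitions
`0 = τ₀ ≤ … ≤ τ_N = t` of `∑ 𝒟(z(τ_{i-1}), z(τ_i))`. -/
def DissOn (Dd : (E d → Mat d) → (E d → Mat d) → ℝ≥0∞)
    (z : ℝ → E d → Mat d) (t : ℝ) : ℝ≥0∞ :=
  ⨆ (N : ℕ) (τ : Fin (N + 1) → ℝ) (_ : Monotone τ) (_ : τ 0 = 0)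
    (_ : τ (Fin.last N) = t),
      ∑ i : Fin N, Dd (z (τ i.castSucc)) (z (τ i.succ))

/-- Stability of a state `(u,z)` at a given time for the energy `Ee` and dissipation `Dd`. -/
def Stable (Qmem : (E d → E d) → (E d → Mat d) → Prop)
    (Ee : (E d → E d) → (E d → Mat d) → EReal)
    (Dd : (E d → Mat d) → (E d → Mat d) → ℝ≥0∞)
    (u : E d → E d) (z : E d → Mat d) : Prop :=
  Ee u z < ⊤ ∧ ∀ uh zh, Qmem uh zh → Ee u z ≤ Ee uh zh + (Dd z zh : EReal)

/-- An energetic solution on `[0,T]` of the rate-independent system given by the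
(time-dependent) energy `Ee`, dissipation `Dd`, power `ℓ'` and initial datum `(u0,z0)`:
global stability and energy balance hold at every time. -/
structure IsEnergeticSol (Qmem : (E d → E d) → (E d → Mat d) → Prop) (T : ℝ)
    (Ee : ℝ → (E d → E d) → (E d → Mat d) → EReal)
    (Dd : (E d → Mat d) → (E d → Mat d) → ℝ≥0∞)
    (ℓ' : ℝ → (E d → E d) → ℝ) (u0 : E d → E d) (z0 : E d → Mat d)
    (u : ℝ → E d → E d) (z : ℝ → E d → Mat d) : Prop where
  init_u : u 0 = u0
  init_z : z 0 = z0
  mem : ∀ t ∈ Icc (0 : ℝ) T, Qmem (u t) (z t)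
  power_int : IntegrableOn (fun s => ℓ' s (u s)) (Icc (0 : ℝ) T)
  stable : ∀ t ∈ Icc (0 : ℝ) T, Stable Qmem (Ee t) Dd (u t) (z t)
  balance : ∀ t ∈ Icc (0 : ℝ) T,
    Ee t (u t) (z t) + (DissOn Dd z t : EReal)
      = Ee 0 u0 z0 - ((∫ s in (0 : ℝ)..t, ℓ' s (u s) : ℝ) : EReal)

/-! ### Auxiliary material for Lemma 3.4 -/

section Aux34

attribute [local instance] Matrix.frobeniusNormedRing Matrix.frobeniusNormedAlgebra
attribute [-instance] instTopologicalSpaceMatrix Matrix.instUniformSpace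

local instance matMeasurableSpace (d : ℕ) : MeasurableSpace (Mat d) := borel _
local instance matBorelSpace (d : ℕ) : BorelSpace (Mat d) := ⟨rfl⟩

variable {d : ℕ}

lemma dev_zero : (0 : Mat d) ∈ Dev d := by
  constructor
  · exact Matrix.transpose_zero
  · simp

lemma dev_smul {A : Mat d} (hA : A ∈ Dev d) (r : ℝ) : r • A ∈ Dev d := by
  obtain ⟨h1, h2⟩ := hA
  exact ⟨by rw [Matrix.transpose_smul, h1], by rw [Matrix.trace_smul, h2, smul_zero]⟩

lemma dev_add {A B : Mat d} (hA : A ∈ Dev d) (hB : B ∈ Dev d) : A + B ∈ Dev d := by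
  obtain ⟨h1, h2⟩ := hA; obtain ⟨h3, h4⟩ := hB
  exact ⟨by rw [Matrix.transpose_add, h1, h3], by rw [Matrix.trace_add, h2, h4, add_zero]⟩

lemma dev_sub {A B : Mat d} (hA : A ∈ Dev d) (hB : B ∈ Dev d) : A - B ∈ Dev d := by
  obtain ⟨h1, h2⟩ := hA; obtain ⟨h3, h4⟩ := hB
  exact ⟨by rw [Matrix.transpose_sub, h1, h3], by rw [Matrix.trace_sub, h2, h4, sub_zero]⟩

lemma isClosed_dev : IsClosed (Dev d) := by
  have h1 : IsClosed {A : Mat d | Aᵀ = A} :=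
    isClosed_eq continuous_id.matrix_transpose continuous_id
  have h2 : IsClosed {A : Mat d | A.trace = 0} :=
    isClosed_eq continuous_id.matrix_trace continuous_const
  exact h1.inter h2

variable {Rdev : Mat d → ℝ} {c₄ c₅ : ℝ}

lemma Rdev_zero (hR : DissAss d Rdev c₄ c₅) : Rdev 0 = 0 := by
  have := hR.hom 0 le_rfl 0 dev_zero
  simpa using this

lemma Rdev_subadd (hR : DissAss d Rdev c₄ c₅) {A B : Mat d} (hA : A ∈ Dev d) (hB : B ∈ Dev d) :
    Rdev (A + B) ≤ Rdev A + Rdev B := by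
  have h2A : (2 : ℝ) • A ∈ Dev d := dev_smul hA 2
  have h2B : (2 : ℝ) • B ∈ Dev d := dev_smul hB 2
  have hc := hR.convexOn.2 h2A h2B (by norm_num : (0:ℝ) ≤ 1/2) (by norm_num : (0:ℝ) ≤ 1/2)
    (by norm_num)
  have heq : (1/2 : ℝ) • ((2:ℝ) • A) + (1/2 : ℝ) • ((2:ℝ) • B) = A + B := by
    rw [smul_smul, smul_smul]; norm_num
  rw [heq] at hc
  rw [hR.hom 2 (by norm_num) A hA, hR.hom 2 (by norm_num) B hB] at hc
  simp only [smul_eq_mul] at hc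
  linarith

lemma Rdev_lip (hR : DissAss d Rdev c₄ c₅) {A B : Mat d} (hA : A ∈ Dev d) (hB : B ∈ Dev d) :
    |Rdev A - Rdev B| ≤ c₅ * ‖A - B‖ := by
  have h1 : Rdev A ≤ Rdev B + c₅ * ‖A - B‖ := by
    have := Rdev_subadd hR hB (dev_sub hA hB)
    rw [add_sub_cancel] at this
    have h2 := hR.ub (A - B) (dev_sub hA hB)
    linarith
  have h2 : Rdev B ≤ Rdev A + c₅ * ‖A - B‖ := by
    have := Rdev_subadd hR hA (dev_sub hB hA)
    rw [add_sub_cancel] at this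
    have h2 := hR.ub (B - A) (dev_sub hB hA)
    rw [norm_sub_rev] at h2
    linarith
  rw [abs_sub_le_iff]; constructor <;> linarith

lemma Rdev_lipOnWith (hR : DissAss d Rdev c₄ c₅) :
    LipschitzOnWith (Real.toNNReal c₅) Rdev (Dev d) := by
  apply LipschitzOnWith.of_dist_le_mul
  intro A hA B hB
  rw [Real.dist_eq, dist_eq_norm]
  calc |Rdev A - Rdev B| ≤ c₅ * ‖A - B‖ := Rdev_lip hR hA hB
    _ ≤ (Real.toNNReal c₅ : ℝ) * ‖A - B‖ :=
        mul_le_mul_of_nonneg_right (Real.le_coe_toNNReal c₅) (norm_nonneg _)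

lemma Rdev_continuousOn (hR : DissAss d Rdev c₄ c₅) : ContinuousOn Rdev (Dev d) :=
  (Rdev_lipOnWith hR).continuousOn

lemma Rext_of_dev {A : Mat d} (hA : A ∈ Dev d) : Rext Rdev A = ENNReal.ofReal (Rdev A) := by
  simp [Rext, hA]

lemma Rext_of_not_dev {A : Mat d} (hA : A ∉ Dev d) : Rext Rdev A = ⊤ := by
  simp [Rext, hA]

/-- A globally Lipschitz extension of `Rdev` from the deviatoric matrices. -/
lemma exists_lip_ext (hR : DissAss d Rdev c₄ c₅) :
    ∃ R' : Mat d → ℝ, LipschitzWith (Real.toNNReal c₅) R' ∧ EqOn Rdev R' (Dev d) :=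
  (Rdev_lipOnWith hR).extend_real

open scoped Classical in
lemma measurable_Rext (hR : DissAss d Rdev c₄ c₅) : Measurable (Rext Rdev) := by
  obtain ⟨R', hlip, heq⟩ := exists_lip_ext hR
  have hfun : Rext Rdev = fun A => if A ∈ Dev d then ENNReal.ofReal (R' A) else ⊤ := by
    funext A
    by_cases hA : A ∈ Dev d
    · simp [Rext, hA, heq hA]
    · simp [Rext, hA]
  rw [hfun]
  exact Measurable.ite isClosed_dev.measurableSet
    (ENNReal.measurable_ofReal.comp hlip.continuous.measurable) measurable_const

lemma isUnit_of_norm_sub_one_lt {A : Mat d} (h : ‖A - 1‖ < 1) : IsUnit A := by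
  have h' : ‖1 - A‖ < 1 := by rwa [norm_sub_rev]
  have hu := (Units.oneSub (1 - A) h').isUnit
  rwa [Units.val_oneSub, sub_sub_cancel] at hu

lemma mat_mul_inv_cancel {A : Mat d} (h : IsUnit A) : A * A⁻¹ = 1 :=
  Matrix.mul_nonsing_inv A ((Matrix.isUnit_iff_isUnit_det A).mp h)

lemma mat_inv_mul_cancel {A : Mat d} (h : IsUnit A) : A⁻¹ * A = 1 :=
  Matrix.nonsing_inv_mul A ((Matrix.isUnit_iff_isUnit_det A).mp h)

end Aux34

section Aux34b

attribute [local instance] Matrix.frobeniusNormedRing Matrix.frobeniusNormedAlgebra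
attribute [-instance] instTopologicalSpaceMatrix Matrix.instUniformSpace

variable {d : ℕ} {Rdev : Mat d → ℝ} {c₄ c₅ : ℝ}

lemma mexp_path_contDiff (B : Mat d) : ContDiff ℝ 1 (fun t : ℝ => mexp (t • B)) := by
  rw [contDiff_one_iff_deriv]
  have hd : ∀ t : ℝ, HasDerivAt (fun u : ℝ => mexp (u • B)) (mexp (t • B) * B) t := fun t =>
    hasDerivAt_exp_smul_const B t
  constructor
  · exact fun t => (hd t).differentiableAt
  · have : deriv (fun u : ℝ => mexp (u • B)) = fun t => mexp (t • B) * B := by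
      funext t; exact (hd t).deriv
    erw [this]
    exact (NormedSpace.exp_continuous.comp (continuous_id.smul continuous_const)).mul
      continuous_const

lemma mexp_deriv_mul_inv (B : Mat d) (t : ℝ) :
    deriv (fun u : ℝ => mexp (u • B)) t * (mexp (t • B))⁻¹ = B := by
  have hd := (hasDerivAt_exp_smul_const B t).deriv
  simp only [mexp]
  erw [hd]
  have hinv : (NormedSpace.exp (t • B))⁻¹ = NormedSpace.exp (-(t • B)) :=
    (Matrix.exp_neg (t • B)).symm
  erw [hinv]
  have hcomm : Commute B (NormedSpace.exp (-(t • B))) := by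
    apply Commute.exp_right
    exact (((Commute.refl B).smul_right t).neg_right)
  rw [mul_assoc, hcomm.eq, ← mul_assoc]
  have : NormedSpace.exp (t • B) * NormedSpace.exp (-(t • B)) = 1 := by
    erw [← Matrix.exp_add_of_commute _ _ (((Commute.refl (t • B)).neg_right))]
    simp
  erw [this, one_mul]

/-- Core upper bound: the dissipation distance to `exp B` is at most `Rdev B`. -/
lemma DistI_exp_le (hR : DissAss d Rdev c₄ c₅) {B : Mat d} (hB : B ∈ Dev d) :
    DistI Rdev (mexp B) ≤ ENNReal.ofReal (Rdev B) := by
  have h0 : (fun t : ℝ => mexp (t • B)) 0 = 1 := by simp [mexp]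
  have h1 : (fun t : ℝ => mexp (t • B)) 1 = mexp B := by simp
  refine le_trans (iInf_le_of_le (fun t : ℝ => mexp (t • B)) ?_) le_rfl
  refine le_trans (iInf_le_of_le (mexp_path_contDiff B) ?_) le_rfl
  refine le_trans (iInf_le_of_le h0 ?_) le_rfl
  refine le_trans (iInf_le_of_le h1 ?_) le_rfl
  have hcongr : ∀ t : ℝ, Rext Rdev (deriv (fun u : ℝ => mexp (u • B)) t * ((fun u : ℝ => mexp (u • B)) t)⁻¹)
      = ENNReal.ofReal (Rdev B) := by
    intro t
    simp only
    rw [mexp_deriv_mul_inv B t, Rext_of_dev hB]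
  calc ∫⁻ t in Icc (0:ℝ) 1, Rext Rdev (deriv (fun u : ℝ => mexp (u • B)) t * ((fun u : ℝ => mexp (u • B)) t)⁻¹)
      = ∫⁻ _ in Icc (0:ℝ) 1, ENNReal.ofReal (Rdev B) := by
        apply lintegral_congr; intro t; exact hcongr t
    _ = ENNReal.ofReal (Rdev B) * volume (Icc (0:ℝ) 1) := by
        rw [setLIntegral_const]
    _ = ENNReal.ofReal (Rdev B) := by
        rw [Real.volume_Icc]; norm_num
    _ ≤ ENNReal.ofReal (Rdev B) := le_rfl

/-- Lemma A: the per-`ε` upper bound along the explicit recovery construction. -/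
lemma DistD_recovery_le (hR : DissAss d Rdev c₄ c₅) (z : Mat d) {A : Mat d} (hA : A ∈ Dev d)
    {ε : ℝ} (hε : 0 < ε) (hz : ‖ε • z‖ < 1) :
    DistD Rdev (1 + ε • z) (1 + ε • (ε⁻¹ • (mexp (ε • A) * (1 + ε • z) - 1)))
      ≤ ENNReal.ofReal (ε * Rdev A) := by
  have hsc : ε • ε⁻¹ • (mexp (ε • A) * (1 + ε • z) - 1) = mexp (ε • A) * (1 + ε • z) - 1 :=
    smul_inv_smul₀ hε.ne' _
  have hU : IsUnit (1 + ε • z) := by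
    apply isUnit_of_norm_sub_one_lt
    simpa using hz
  have hkey : (1 + ε • (ε⁻¹ • (mexp (ε • A) * (1 + ε • z) - 1))) * (1 + ε • z)⁻¹
      = mexp (ε • A) := by
    rw [hsc, add_sub_cancel, mul_assoc, mat_mul_inv_cancel hU, mul_one]
  rw [DistD, hkey]
  calc DistI Rdev (mexp (ε • A)) ≤ ENNReal.ofReal (Rdev (ε • A)) :=
        DistI_exp_le hR (dev_smul hA ε)
    _ = ENNReal.ofReal (ε * Rdev A) := by rw [hR.hom ε hε.le A hA]

/-- Lemma C: convergence of the explicit recovery sequence. -/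
lemma recovery_tendsto (z A : Mat d) {ε : ℕ → ℝ} (hε : ∀ n, 0 < ε n)
    (hε0 : Tendsto ε atTop (𝓝 0)) :
    Tendsto (fun n => (ε n)⁻¹ • (mexp (ε n • A) * (1 + ε n • z) - 1)) atTop (𝓝 (A + z)) := by
  set h : ℝ → Mat d := fun u => mexp (u • A) * (1 + u • z) with hh
  have hd : HasDerivAt h (A + z) 0 := by
    have h1 : HasDerivAt (fun u : ℝ => mexp (u • A)) (mexp ((0:ℝ) • A) * A) 0 :=
      hasDerivAt_exp_smul_const A 0
    have h2 : HasDerivAt (fun u : ℝ => (1 + u • z : Mat d)) z 0 := by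
      have : HasDerivAt (fun u : ℝ => (u • z : Mat d)) z 0 := by
        simpa using (hasDerivAt_id (0:ℝ)).smul_const z
      simpa using this.const_add 1
    have := h1.mul h2
    simp only [zero_smul, mexp, NormedSpace.exp_zero, one_mul, mul_one, zero_add] at this ⊢
    convert this using 1
    · rfl
    · rfl
    · rfl
    · simp
  have hslope := hasDerivAt_iff_tendsto_slope.mp hd
  have hεne : ∀ᶠ n in atTop, ε n ∈ ({(0:ℝ)}ᶜ : Set ℝ) :=
    Eventually.of_forall (fun n => (hε n).ne')
  have htend : Tendsto ε atTop (𝓝[≠] (0:ℝ)) :=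
    tendsto_nhdsWithin_of_tendsto_nhds_of_eventually_within ε hε0 hεne
  have := hslope.comp htend
  have hEq : (slope h 0) ∘ ε = fun n => (ε n)⁻¹ • (mexp (ε n • A) * (1 + ε n • z) - 1) := by
    funext n
    simp only [Function.comp_apply, slope_def_module, sub_zero, hh]
    congr 1
    simp [mexp]
  rwa [hEq] at this

end Aux34b

section Aux34c

attribute [local instance] Matrix.frobeniusNormedRing Matrix.frobeniusNormedAlgebra

local instance (d : ℕ) : MeasurableSpace (Mat d) := borel _
local instance (d : ℕ) : BorelSpace (Mat d) := ⟨rfl⟩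
attribute [-instance] instTopologicalSpaceMatrix Matrix.instUniformSpace
local instance (d : ℕ) : BorelSpace (Mat d) := ⟨rfl⟩

variable {d : ℕ} {Rdev : Mat d → ℝ} {c₄ c₅ : ℝ}

lemma measurable_matrix_inv : Measurable fun A : Mat d => A⁻¹ := by
  have h1 : Measurable fun A : Mat d => (A.det)⁻¹ :=
    measurable_inv.comp continuous_id.matrix_det.measurable
  have := h1.smul continuous_id.matrix_adjugate.measurable
  simp only [Matrix.inv_def, Ring.inverse_eq_inv']
  exact this

/-- The key lower-bound lemma for a single finite-cost path starting at the identity. -/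
lemma path_lemma (hR : DissAss d Rdev c₄ c₅) (P : ℝ → Mat d) (hP : ContDiff ℝ 1 P)
    (h0 : P 0 = 1) {c : ℝ}
    (hcost : ∫⁻ t in Icc (0:ℝ) 1, Rext Rdev (deriv P t * (P t)⁻¹) ≤ ENNReal.ofReal c)
    (hc0 : 0 ≤ c) (hcs : c ≤ c₄ / (4 * (‖(1 : Mat d)‖ + 1))) :
    ∃ ζ ∈ Dev d, Rdev ζ ≤ c ∧ ‖P 1 - 1 - ζ‖ ≤ (‖(1 : Mat d)‖ + 1) * (c / c₄) ^ 2 := by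
  classical
  set Cd : ℝ := ‖(1 : Mat d)‖ + 1 with hCd
  have hCd0 : 0 < Cd := by positivity
  have hc₄ := hR.c4pos
  set f : ℝ → Mat d := fun t => deriv P t * (P t)⁻¹ with hf
  set μ : Measure ℝ := volume.restrict (Icc (0:ℝ) 1) with hμ
  have hfm : Measurable f :=
    (measurable_deriv P).mul (measurable_matrix_inv.comp hP.continuous.measurable)
  -- a.e. deviatoric
  have hae : ∀ᵐ t ∂μ, f t ∈ Dev d := by
    have hlt : ∀ᵐ t ∂μ, Rext Rdev (f t) < ⊤ :=
      ae_lt_top ((measurable_Rext hR).comp hfm)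
        (lt_of_le_of_lt hcost ENNReal.ofReal_lt_top).ne
    filter_upwards [hlt] with t ht
    by_contra hnd
    rw [Rext_of_not_dev hnd] at ht
    exact lt_irrefl ⊤ ht
  -- lintegral norm bound
  have hnl : ∫⁻ t, ENNReal.ofReal ‖f t‖ ∂μ ≤ ENNReal.ofReal (c / c₄) := by
    have hkey : ∀ᵐ t ∂μ, ENNReal.ofReal c₄ * ENNReal.ofReal ‖f t‖ ≤ Rext Rdev (f t) := by
      filter_upwards [hae] with t ht
      rw [Rext_of_dev ht, ← ENNReal.ofReal_mul hc₄.le]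
      exact ENNReal.ofReal_le_ofReal (hR.lb _ ht)
    have hm : Measurable fun t => ENNReal.ofReal ‖f t‖ := hfm.norm.ennreal_ofReal
    have h1 : ENNReal.ofReal c₄ * ∫⁻ t, ENNReal.ofReal ‖f t‖ ∂μ ≤ ENNReal.ofReal c := by
      rw [← lintegral_const_mul _ hm]
      exact le_trans (lintegral_mono_ae hkey) hcost
    have h2 : ∫⁻ t, ENNReal.ofReal ‖f t‖ ∂μ ≤ ENNReal.ofReal c / ENNReal.ofReal c₄ := by
      rw [ENNReal.le_div_iff_mul_le (Or.inl (by simpa using hc₄)) (Or.inl ENNReal.ofReal_ne_top)]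
      rwa [mul_comm]
    rwa [← ENNReal.ofReal_div_of_pos hc₄] at h2
  -- real integral norm bound
  have hrealint : ∀ s : ℝ, 0 ≤ s → s ≤ 1 → ContinuousOn f (Icc 0 s) →
      ∫ u in (0:ℝ)..s, ‖f u‖ ≤ c / c₄ := by
    intro s hs0 hs1 hfc
    have hint : IntegrableOn (fun u => ‖f u‖) (Ioc (0:ℝ) s) :=
      (hfc.norm.integrableOn_Icc).mono_set Ioc_subset_Icc_self
    have heq : ENNReal.ofReal (∫ u in (0:ℝ)..s, ‖f u‖)
        = ∫⁻ u in Ioc (0:ℝ) s, ENNReal.ofReal ‖f u‖ := by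
      rw [intervalIntegral.integral_of_le hs0]
      exact ofReal_integral_eq_lintegral_ofReal hint
        (Eventually.of_forall fun u => norm_nonneg _)
    have hle : (∫⁻ u in Ioc (0:ℝ) s, ENNReal.ofReal ‖f u‖)
        ≤ ∫⁻ u in Icc (0:ℝ) 1, ENNReal.ofReal ‖f u‖ :=
      lintegral_mono_set (fun u hu => ⟨hu.1.le, hu.2.trans hs1⟩)
    have := le_trans (le_trans heq.le hle) hnl
    rwa [ENNReal.ofReal_le_ofReal_iff (by positivity)] at this
  -- geometry helpers
  set g : ℝ → ℝ := fun t => ‖P t - 1‖ with hgdef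
  have hg : Continuous g := (hP.continuous.sub continuous_const).norm
  have hg0 : g 0 = 0 := by simp [hgdef, h0]
  -- the bootstrapping step
  have hstep : ∀ T, 0 ≤ T → T ≤ 1 → (∀ s ∈ Icc (0:ℝ) T, g s ≤ 1/2) →
      ∀ s ∈ Icc (0:ℝ) T, g s ≤ Cd * (c / c₄) := by
    intro T hT0 hT1 hbound
    have hunit : ∀ s ∈ Icc (0:ℝ) T, IsUnit (P s) := fun s hs =>
      isUnit_of_norm_sub_one_lt (lt_of_le_of_lt (hbound s hs) (by norm_num))
    have hPn : ∀ s ∈ Icc (0:ℝ) T, ‖P s‖ ≤ Cd := by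
      intro s hs
      have h1 : ‖P s‖ - ‖(1 : Mat d)‖ ≤ ‖P s - 1‖ := norm_sub_norm_le _ _
      have := hbound s hs
      simp only [hgdef] at this
      rw [hCd]; linarith
    have hfc : ContinuousOn f (Icc 0 T) := by
      apply ContinuousOn.mul ((hP.continuous_deriv le_rfl).continuousOn)
      intro s hs
      have hdet : ContinuousAt Ring.inverse (P s).det := by
        rw [Ring.inverse_eq_inv']
        exact continuousAt_inv₀ ((Matrix.isUnit_iff_isUnit_det _).mp (hunit s hs)).ne_zero
      exact ((continuousAt_matrix_inv (P s) hdet).comp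
        hP.continuous.continuousAt).continuousWithinAt
    have hderiv_eq : ∀ s ∈ Icc (0:ℝ) T, deriv P s = f s * P s := by
      intro s hs
      rw [hf]
      simp only
      rw [mul_assoc, mat_inv_mul_cancel (hunit s hs), mul_one]
    intro s hs
    have hss : Icc (0:ℝ) s ⊆ Icc 0 T := Icc_subset_Icc le_rfl hs.2
    have hftc : P s - 1 = ∫ u in (0:ℝ)..s, deriv P u := by
      rw [intervalIntegral.integral_deriv_eq_sub
        (fun x _ => hP.differentiable one_ne_zero x)
        ((hP.continuous_deriv le_rfl).intervalIntegrable _ _), h0]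
    have hnint : ∫ u in (0:ℝ)..s, ‖deriv P u‖ ≤ ∫ u in (0:ℝ)..s, Cd * ‖f u‖ := by
      apply intervalIntegral.integral_mono_on hs.1
      · exact ((hP.continuous_deriv le_rfl).norm.continuousOn.intervalIntegrable)
      · have : ContinuousOn (fun u => Cd * ‖f u‖) (Set.uIcc (0:ℝ) s) := by
          rw [Set.uIcc_of_le hs.1]
          exact continuousOn_const.mul (hfc.mono hss).norm
        exact this.intervalIntegrable
      · intro u hu
        have hu' : u ∈ Icc (0:ℝ) T := hss hu
        rw [hderiv_eq u hu']
        calc ‖f u * P u‖ ≤ ‖f u‖ * ‖P u‖ := norm_mul_le _ _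
          _ ≤ ‖f u‖ * Cd := by
              exact mul_le_mul_of_nonneg_left (hPn u hu') (norm_nonneg _)
          _ = Cd * ‖f u‖ := mul_comm _ _
    have : g s ≤ ∫ u in (0:ℝ)..s, ‖deriv P u‖ := by
      rw [hgdef]
      simp only
      rw [hftc]
      exact intervalIntegral.norm_integral_le_integral_norm hs.1
    have h3 : ∫ u in (0:ℝ)..s, Cd * ‖f u‖ = Cd * ∫ u in (0:ℝ)..s, ‖f u‖ := by
      simp [intervalIntegral.integral_const_mul]
    have h4 : ∫ u in (0:ℝ)..s, ‖f u‖ ≤ c / c₄ :=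
      hrealint s hs.1 (hs.2.trans hT1) (hfc.mono hss)
    calc g s ≤ ∫ u in (0:ℝ)..s, ‖deriv P u‖ := this
      _ ≤ ∫ u in (0:ℝ)..s, Cd * ‖f u‖ := hnint
      _ = Cd * ∫ u in (0:ℝ)..s, ‖f u‖ := h3
      _ ≤ Cd * (c / c₄) := mul_le_mul_of_nonneg_left h4 hCd0.le
  have hCdc : Cd * (c / c₄) ≤ 1/4 := by
    have h1 : c / c₄ ≤ 1 / (4 * Cd) := by
      rw [div_le_div_iff₀ hc₄ (by positivity)]
      calc c * (4 * Cd) ≤ (c₄ / (4 * Cd)) * (4 * Cd) := by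
            exact mul_le_mul_of_nonneg_right hcs (by positivity)
        _ = c₄ := by field_simp
        _ = 1 * c₄ := (one_mul _).symm
    calc Cd * (c / c₄) ≤ Cd * (1 / (4 * Cd)) := mul_le_mul_of_nonneg_left h1 hCd0.le
      _ = 1/4 := by field_simp
  -- supremum argument
  set S : Set ℝ := {t ∈ Icc (0:ℝ) 1 | ∀ s ∈ Icc (0:ℝ) t, g s ≤ 1/2} with hS
  have h0S : (0:ℝ) ∈ S := by
    refine ⟨⟨le_rfl, zero_le_one⟩, fun s hsmem => ?_⟩
    have : s = 0 := le_antisymm hsmem.2 hsmem.1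
    rw [this, hg0]; norm_num
  have hSb : BddAbove S := ⟨1, fun t ht => ht.1.2⟩
  set T : ℝ := sSup S with hTdef
  have hT0 : 0 ≤ T := le_csSup hSb h0S
  have hT1 : T ≤ 1 := csSup_le ⟨0, h0S⟩ fun t ht => ht.1.2
  have hltT : ∀ s, 0 ≤ s → s < T → g s ≤ 1/2 := by
    intro s hs0 hsT
    obtain ⟨t, htS, hst⟩ := exists_lt_of_lt_csSup ⟨0, h0S⟩ hsT
    exact htS.2 s ⟨hs0, hst.le⟩
  have hTS : T ∈ S := by
    refine ⟨⟨hT0, hT1⟩, fun s hsmem => ?_⟩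
    rcases lt_or_eq_of_le hsmem.2 with hlt | heq
    · exact hltT s hsmem.1 hlt
    · rw [heq]
      rcases eq_or_lt_of_le hT0 with h | h
      · rw [← h, hg0]; norm_num
      · have hC : IsClosed {x : ℝ | g x ≤ 1/2} := isClosed_le hg continuous_const
        have hsub : Ico 0 T ⊆ {x : ℝ | g x ≤ 1/2} := fun x hx => hltT x hx.1 hx.2
        have hmem : T ∈ closure (Ico (0:ℝ) T) := by
          rw [closure_Ico h.ne]
          exact ⟨hT0, le_rfl⟩
        have := closure_mono hsub hmem
        rwa [hC.closure_eq] at this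
  have hTone : T = 1 := by
    by_contra hne
    have hTlt : T < 1 := lt_of_le_of_ne hT1 hne
    have hgT : g T < 1/2 := by
      have := hstep T hT0 hT1 hTS.2 T ⟨hT0, le_rfl⟩
      linarith
    have hev : ∀ᶠ x in 𝓝 T, g x < 1/2 :=
      (hg.continuousAt (x := T)).eventually_lt_const hgT
    obtain ⟨δ, hδ0, hδ⟩ := Metric.eventually_nhds_iff.mp hev
    set T' : ℝ := min 1 (T + δ/2) with hT'def
    have hTT' : T < T' := by
      apply lt_min hTlt
      linarith
    have hT'S : T' ∈ S := by
      refine ⟨⟨le_trans hT0 hTT'.le, min_le_left _ _⟩, fun s hsmem => ?_⟩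
      rcases le_or_gt s T with h | h
      · exact hTS.2 s ⟨hsmem.1, h⟩
      · apply le_of_lt
        apply hδ
        rw [Real.dist_eq, abs_of_pos (by linarith)]
        have : s ≤ T + δ/2 := le_trans hsmem.2 (min_le_right _ _)
        linarith
    exact absurd (le_csSup hSb hT'S) (not_le.mpr hTT')
  -- global consequences
  have hhalf : ∀ s ∈ Icc (0:ℝ) 1, g s ≤ 1/2 := by
    intro s hs
    exact hTS.2 s (by rw [hTone]; exact hs)
  have hgsmall : ∀ s ∈ Icc (0:ℝ) 1, g s ≤ Cd * (c / c₄) := by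
    intro s hs
    exact hstep T hT0 hT1 hTS.2 s (by rw [hTone]; exact hs)
  have hunit : ∀ s ∈ Icc (0:ℝ) 1, IsUnit (P s) := fun s hs =>
    isUnit_of_norm_sub_one_lt (lt_of_le_of_lt (hhalf s hs) (by norm_num))
  have hfc : ContinuousOn f (Icc 0 1) := by
    apply ContinuousOn.mul ((hP.continuous_deriv le_rfl).continuousOn)
    intro s hs
    have hdet : ContinuousAt Ring.inverse (P s).det := by
      rw [Ring.inverse_eq_inv']
      exact continuousAt_inv₀ ((Matrix.isUnit_iff_isUnit_det _).mp (hunit s hs)).ne_zero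
    exact ((continuousAt_matrix_inv (P s) hdet).comp
      hP.continuous.continuousAt).continuousWithinAt
  have hderiv_eq : ∀ s ∈ Icc (0:ℝ) 1, deriv P s = f s * P s := by
    intro s hs
    rw [hf]; simp only
    rw [mul_assoc, mat_inv_mul_cancel (hunit s hs), mul_one]
  have hfint : IntegrableOn f (Icc (0:ℝ) 1) := hfc.integrableOn_Icc
  -- the candidate ζ
  set ζ : Mat d := ∫ t, f t ∂μ with hζ
  -- entry maps
  have hentry : ∀ (i j : Fin d), ζ i j = ∫ t, f t i j ∂μ := by
    intro i j
    let e : Mat d →ₗ[ℝ] ℝ :=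
      { toFun := fun A => A i j, map_add' := fun _ _ => rfl, map_smul' := fun _ _ => rfl }
    let L : Mat d →L[ℝ] ℝ := LinearMap.toContinuousLinearMap e
    have hL : ∀ A : Mat d, L A = A i j := fun A => by
      simp [L, e, LinearMap.coe_toContinuousLinearMap']; rfl
    have h2 := L.integral_comp_comm hfint
    calc ζ i j = L (∫ t, f t ∂μ) := (hL _).symm
      _ = ∫ t, L (f t) ∂μ := h2.symm
      _ = ∫ t, f t i j ∂μ := by simp_rw [hL]
  have hζdev : ζ ∈ Dev d := by
    constructor
    · apply Matrix.ext
      intro i j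
      rw [Matrix.transpose_apply, hentry i j, hentry j i]
      apply integral_congr_ae
      filter_upwards [hae] with t ht
      conv_rhs => rw [← ht.1]
      rw [Matrix.transpose_apply]
    · have htr : ζ.trace = ∑ i, ζ i i := rfl
      rw [htr]
      have : ∀ i : Fin d, ζ i i = ∫ t, f t i i ∂μ := fun i => hentry i i
      simp_rw [this]
      rw [← integral_finset_sum]
      · have : ∫ t, (∑ i, f t i i) ∂μ = ∫ t, (0:ℝ) ∂μ := by
          apply integral_congr_ae
          filter_upwards [hae] with t ht
          have := ht.2
          simpa [Matrix.trace, Matrix.diag] using this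
        rw [this, integral_zero]
      · intro i _
        let e : Mat d →ₗ[ℝ] ℝ :=
          { toFun := fun A => A i i, map_add' := fun _ _ => rfl, map_smul' := fun _ _ => rfl }
        let L : Mat d →L[ℝ] ℝ := LinearMap.toContinuousLinearMap e
        have hL : ∀ A : Mat d, L A = A i i := fun A => by
          simp [L, e, LinearMap.coe_toContinuousLinearMap']; rfl
        have := L.integrable_comp hfint
        apply this.congr
        exact Eventually.of_forall fun t => hL (f t)
  -- Jensen
  obtain ⟨R', hlip, heqR⟩ := exists_lip_ext hR
  have hRconv' : ConvexOn ℝ (Dev d) R' := by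
    refine ⟨hR.convexOn.1, fun x hx y hy a b ha hb hab => ?_⟩
    have hmem := hR.convexOn.1 hx hy ha hb hab
    rw [← heqR hx, ← heqR hy, ← heqR hmem]
    exact hR.convexOn.2 hx hy ha hb hab
  have huniv : μ univ = 1 := by
    rw [hμ, Measure.restrict_apply_univ, Real.volume_Icc]
    norm_num
  haveI : IsFiniteMeasure μ := ⟨by rw [huniv]; exact ENNReal.one_lt_top⟩
  haveI : NeZero μ := ⟨fun h => by simp [h] at huniv⟩
  have hgi : Integrable (fun t => R' (f t)) μ := by
    apply Integrable.mono' ((integrable_const |R' 0|).add (hfint.norm.const_mul (Real.toNNReal c₅ : ℝ)))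
    · exact hlip.continuous.comp_aestronglyMeasurable hfint.aestronglyMeasurable
    · apply Eventually.of_forall
      intro t
      have h1 : |R' (f t) - R' 0| ≤ (Real.toNNReal c₅ : ℝ) * ‖f t‖ := by
        have := hlip.dist_le_mul (f t) 0
        rwa [Real.dist_eq, dist_zero_right] at this
      have h2 : |R' (f t)| ≤ |R' 0| + (Real.toNNReal c₅ : ℝ) * ‖f t‖ := by
        have := abs_sub_abs_le_abs_sub (R' (f t)) (R' 0)
        linarith
      simpa using h2
  have hjensen : R' ζ ≤ ∫ t, R' (f t) ∂μ := by
    have := hRconv'.map_average_le hlip.continuous.continuousOn isClosed_dev hae hfint hgi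
    rwa [average_eq, average_eq, measureReal_def, huniv, ENNReal.toReal_one, inv_one, one_smul, one_smul] at this
  have hint2 : Integrable (fun t => Rdev (f t)) μ := by
    apply hgi.congr
    filter_upwards [hae] with t ht
    exact (heqR ht).symm
  have hRint_eq : ∫ t, R' (f t) ∂μ = ∫ t, Rdev (f t) ∂μ := by
    apply integral_congr_ae
    filter_upwards [hae] with t ht
    exact (heqR ht).symm
  have hupper : ∫ t, Rdev (f t) ∂μ ≤ c := by
    have hofr : ENNReal.ofReal (∫ t, Rdev (f t) ∂μ) = ∫⁻ t, ENNReal.ofReal (Rdev (f t)) ∂μ := by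
      apply ofReal_integral_eq_lintegral_ofReal hint2
      filter_upwards [hae] with t ht
      exact hR.nonneg _ ht
    have hRext_eq : ∫⁻ t, ENNReal.ofReal (Rdev (f t)) ∂μ = ∫⁻ t, Rext Rdev (f t) ∂μ := by
      apply lintegral_congr_ae
      filter_upwards [hae] with t ht
      exact (Rext_of_dev ht).symm
    have := le_trans (le_of_eq (hofr.trans hRext_eq)) hcost
    rwa [ENNReal.ofReal_le_ofReal_iff hc0] at this
  have hRζ : Rdev ζ ≤ c := by
    rw [heqR hζdev]
    calc R' ζ ≤ ∫ t, R' (f t) ∂μ := hjensen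
      _ = ∫ t, Rdev (f t) ∂μ := hRint_eq
      _ ≤ c := hupper
  -- final norm estimate
  have hFTC : P 1 - 1 = ∫ t, deriv P t ∂μ := by
    have h1 : ∫ u in (0:ℝ)..1, deriv P u = P 1 - P 0 :=
      intervalIntegral.integral_deriv_eq_sub (fun x _ => hP.differentiable one_ne_zero x)
        ((hP.continuous_deriv le_rfl).intervalIntegrable _ _)
    rw [h0] at h1
    have h2 : ∫ t, deriv P t ∂μ = ∫ t in Ioc (0:ℝ) 1, deriv P t := by
      rw [hμ]
      exact integral_Icc_eq_integral_Ioc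
    rw [h2, ← intervalIntegral.integral_of_le zero_le_one, h1]
  have hdint : IntegrableOn (deriv P) (Icc (0:ℝ) 1) :=
    (hP.continuous_deriv le_rfl).continuousOn.integrableOn_Icc
  have hdiff : ζ - (P 1 - 1) = ∫ t, (f t - deriv P t) ∂μ := by
    rw [hζ, hFTC, integral_sub hfint hdint]
  have hptw : ∀ t ∈ Icc (0:ℝ) 1, f t - deriv P t = f t * (1 - P t) := by
    intro t ht
    rw [mul_sub, mul_one, ← hderiv_eq t ht]
  have hnormint : ‖ζ - (P 1 - 1)‖ ≤ Cd * (c / c₄) * (c / c₄) := by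
    rw [hdiff]
    calc ‖∫ t, (f t - deriv P t) ∂μ‖ ≤ ∫ t, ‖f t - deriv P t‖ ∂μ :=
          norm_integral_le_integral_norm _
      _ ≤ ∫ t, (Cd * (c / c₄)) * ‖f t‖ ∂μ := by
          apply integral_mono_ae (hfint.sub hdint).norm
            (hfint.norm.const_mul _)
          filter_upwards [ae_restrict_mem measurableSet_Icc] with t ht
          simp only [Pi.sub_apply]
          rw [hptw t ht]
          calc ‖f t * (1 - P t)‖ ≤ ‖f t‖ * ‖1 - P t‖ := norm_mul_le _ _
            _ ≤ ‖f t‖ * (Cd * (c / c₄)) := by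
                apply mul_le_mul_of_nonneg_left _ (norm_nonneg _)
                rw [norm_sub_rev]
                exact hgsmall t ht
            _ = (Cd * (c / c₄)) * ‖f t‖ := mul_comm _ _
      _ = (Cd * (c / c₄)) * ∫ t, ‖f t‖ ∂μ := integral_const_mul _ _
      _ ≤ (Cd * (c / c₄)) * (c / c₄) := by
          apply mul_le_mul_of_nonneg_left _ (by positivity)
          have h1 : ∫ t, ‖f t‖ ∂μ = ∫ u in (0:ℝ)..1, ‖f u‖ := by
            rw [intervalIntegral.integral_of_le zero_le_one, hμ]
            exact integral_Icc_eq_integral_Ioc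
          rw [h1]
          exact hrealint 1 zero_le_one le_rfl hfc
  refine ⟨ζ, hζdev, hRζ, ?_⟩
  calc ‖P 1 - 1 - ζ‖ = ‖ζ - (P 1 - 1)‖ := norm_sub_rev _ _
    _ ≤ Cd * (c / c₄) * (c / c₄) := hnormint
    _ = (‖(1 : Mat d)‖ + 1) * (c / c₄) ^ 2 := by rw [hCd]; ring

end Aux34c

section Aux34d

attribute [local instance] Matrix.frobeniusNormedRing Matrix.frobeniusNormedAlgebra
attribute [-instance] instTopologicalSpaceMatrix Matrix.instUniformSpace

variable {d : ℕ} {Rdev : Mat d → ℝ} {c₄ c₅ : ℝ}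

lemma exists_path_of_DistI_lt {Phat : Mat d} {X : ℝ≥0∞} (h : DistI Rdev Phat < X) :
    ∃ P : ℝ → Mat d, ContDiff ℝ 1 P ∧ P 0 = 1 ∧ P 1 = Phat ∧
      (∫⁻ t in Icc (0:ℝ) 1, Rext Rdev (deriv P t * (P t)⁻¹)) < X := by
  rw [DistI] at h
  rw [iInf_lt_iff] at h
  obtain ⟨P, h⟩ := h
  rw [iInf_lt_iff] at h
  obtain ⟨h1, h⟩ := h
  rw [iInf_lt_iff] at h
  obtain ⟨h2, h⟩ := h
  rw [iInf_lt_iff] at h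
  obtain ⟨h3, h⟩ := h
  exact ⟨P, h1, h2, h3, h⟩

/-- The Γ-liminf inequality. -/
lemma Gamma_liminf (hR : DissAss d Rdev c₄ c₅) (z zh : Mat d) (ε : ℕ → ℝ)
    (hεpos : ∀ n, 0 < ε n) (hε0 : Tendsto ε atTop (𝓝 0))
    (zs zsh : ℕ → Mat d) (hzs : Tendsto zs atTop (𝓝 z)) (hzsh : Tendsto zsh atTop (𝓝 zh)) :
    Rext Rdev (zh - z) ≤ Filter.liminf (fun n => ENNReal.ofReal ((ε n)⁻¹) *
      DistD Rdev (1 + ε n • zs n) (1 + ε n • zsh n)) atTop := by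
  classical
  set Cd : ℝ := ‖(1 : Mat d)‖ + 1 with hCd
  have hCd0 : 0 < Cd := by positivity
  have hc₄ := hR.c4pos
  set L : ℕ → ℝ≥0∞ := fun n => ENNReal.ofReal ((ε n)⁻¹) *
    DistD Rdev (1 + ε n • zs n) (1 + ε n • zsh n) with hL
  by_contra hcon
  push_neg at hcon
  obtain ⟨b, hb1, hb2⟩ := exists_between hcon
  have hbtop : b ≠ ⊤ := hb2.ne_top
  have hfreq : ∃ᶠ n in atTop, L n < b := frequently_lt_of_liminf_lt (by isBoundedDefault) hb1
  obtain ⟨φ, hφmono, hφ⟩ := extraction_of_frequently_atTop hfreq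
  set B : ℝ := b.toReal with hB
  have hB0 : 0 ≤ B := ENNReal.toReal_nonneg
  set ε' : ℕ → ℝ := fun k => ε (φ k) with hε'
  have hε'pos : ∀ k, 0 < ε' k := fun k => hεpos (φ k)
  have hε'0 : Tendsto ε' atTop (𝓝 0) := hε0.comp hφmono.tendsto_atTop
  set zs' : ℕ → Mat d := fun k => zs (φ k) with hzs'd
  set zsh' : ℕ → Mat d := fun k => zsh (φ k) with hzsh'd
  have hzs' : Tendsto zs' atTop (𝓝 z) := hzs.comp hφmono.tendsto_atTop
  have hzsh' : Tendsto zsh' atTop (𝓝 zh) := hzsh.comp hφmono.tendsto_atTop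
  set c : ℕ → ℝ := fun k => ε' k * (B + ε' k) with hc
  have hc0 : ∀ k, 0 ≤ c k := fun k => by
    have := (hε'pos k).le
    have : 0 ≤ B + ε' k := by linarith [(hε'pos k).le]
    positivity
  set Phat : ℕ → Mat d := fun k => (1 + ε' k • zsh' k) * (1 + ε' k • zs' k)⁻¹ with hPhat
  -- the distance bound along the subsequence
  have hDlt : ∀ k, DistI Rdev (Phat k) < ENNReal.ofReal (c k) := by
    intro k
    have h1 := hφ k
    rw [hL] at h1
    simp only [DistD] at h1
    have h2 : ENNReal.ofReal ((ε' k)⁻¹) * DistI Rdev (Phat k) < b := h1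
    have hne : ENNReal.ofReal ((ε' k)⁻¹) ≠ 0 := by
      simp [ENNReal.ofReal_eq_zero, not_le, inv_pos, hε'pos k]
    have h3 : DistI Rdev (Phat k) ≤ ENNReal.ofReal (ε' k) * b := by
      have h4 : DistI Rdev (Phat k)
          = ENNReal.ofReal (ε' k) * (ENNReal.ofReal ((ε' k)⁻¹) * DistI Rdev (Phat k)) := by
        rw [← mul_assoc, ← ENNReal.ofReal_mul (hε'pos k).le,
          mul_inv_cancel₀ (hε'pos k).ne', ENNReal.ofReal_one, one_mul]
      rw [h4]
      exact mul_le_mul_right h2.le _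
    have h5 : ENNReal.ofReal (ε' k) * b = ENNReal.ofReal (ε' k * B) := by
      rw [← ENNReal.ofReal_toReal hbtop, ← ENNReal.ofReal_mul (hε'pos k).le]
    have h6 : ENNReal.ofReal (ε' k * B) < ENNReal.ofReal (c k) := by
      have hp := hε'pos k
      have hlt : ε' k * B < c k := by
        show ε' k * B < ε' k * (B + ε' k)
        nlinarith
      have hcpos : 0 < c k := by
        show 0 < ε' k * (B + ε' k)
        nlinarith
      exact (ENNReal.ofReal_lt_ofReal_iff hcpos).mpr hlt
    calc DistI Rdev (Phat k) ≤ ENNReal.ofReal (ε' k) * b := h3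
      _ = ENNReal.ofReal (ε' k * B) := h5
      _ < ENNReal.ofReal (c k) := h6
  -- eventually the path lemma applies
  have hevsmall : ∀ᶠ k in atTop, c k ≤ c₄ / (4 * Cd) := by
    have htc : Tendsto c atTop (𝓝 0) := by
      have : Tendsto (fun k => ε' k * (B + ε' k)) atTop (𝓝 (0 * (B + 0))) :=
        hε'0.mul (tendsto_const_nhds.add hε'0)
      simpa [hc] using this
    have : (0:ℝ) < c₄ / (4 * Cd) := by positivity
    exact (htc.eventually_le_const this)
  have hexg : ∀ᶠ k in atTop, ∃ ζ ∈ Dev d, Rdev ζ ≤ c k ∧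
      ‖Phat k - 1 - ζ‖ ≤ Cd * (c k / c₄) ^ 2 := by
    filter_upwards [hevsmall] with k hk
    obtain ⟨P, hP1, hP2, hP3, hP4⟩ := exists_path_of_DistI_lt (hDlt k)
    have hres := path_lemma hR P hP1 hP2 hP4.le (hc0 k) hk
    rw [hP3] at hres
    simpa [hCd] using hres
  set ζ : ℕ → Mat d := fun k =>
    if h : ∃ ζ ∈ Dev d, Rdev ζ ≤ c k ∧ ‖Phat k - 1 - ζ‖ ≤ Cd * (c k / c₄) ^ 2
    then h.choose else 0 with hζdef
  have hζspec : ∀ᶠ k in atTop, ζ k ∈ Dev d ∧ Rdev (ζ k) ≤ c k ∧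
      ‖Phat k - 1 - ζ k‖ ≤ Cd * (c k / c₄) ^ 2 := by
    filter_upwards [hexg] with k hk
    rw [hζdef]
    simp only [dif_pos hk]
    obtain ⟨h1, h2, h3⟩ := hk.choose_spec
    exact ⟨h1, h2, h3⟩
  set w : ℕ → Mat d := fun k => (ε' k)⁻¹ • ζ k with hw
  -- limits
  have hone : Tendsto (fun k => 1 + ε' k • zs' k) atTop (𝓝 (1 : Mat d)) := by
    have : Tendsto (fun k => ε' k • zs' k) atTop (𝓝 ((0:ℝ) • z)) := hε'0.smul hzs'
    rw [zero_smul] at this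
    simpa using tendsto_const_nhds.add this
  have hinv : Tendsto (fun k => (1 + ε' k • zs' k)⁻¹) atTop (𝓝 (1 : Mat d)) := by
    have hdet : ContinuousAt Ring.inverse (1 : Mat d).det := by
      rw [Ring.inverse_eq_inv']
      apply continuousAt_inv₀
      simp
    have hcont : ContinuousAt (fun A : Mat d => A⁻¹) 1 := continuousAt_matrix_inv 1 hdet
    have := hcont.tendsto.comp hone
    simpa [Function.comp_def] using this
  have hevunit : ∀ᶠ k in atTop, IsUnit (1 + ε' k • zs' k) := by
    have : Tendsto (fun k => ‖ε' k • zs' k‖) atTop (𝓝 0) := by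
      have h1 : Tendsto (fun k => ε' k • zs' k) atTop (𝓝 (0 : Mat d)) := by
        have : Tendsto (fun k => ε' k • zs' k) atTop (𝓝 ((0:ℝ) • z)) := hε'0.smul hzs'
        rwa [zero_smul] at this
      simpa [Function.comp_def] using (continuous_norm.tendsto (0 : Mat d)).comp h1
    filter_upwards [this.eventually_lt_const (by norm_num : (0:ℝ) < 1)] with k hk
    apply isUnit_of_norm_sub_one_lt
    simpa using hk
  set u : ℕ → Mat d := fun k => (ε' k)⁻¹ • (Phat k - 1) with hu
  have huev : ∀ᶠ k in atTop, u k = (zsh' k - zs' k) * (1 + ε' k • zs' k)⁻¹ := by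
    filter_upwards [hevunit] with k hk
    have h1 : Phat k - 1 = (ε' k • (zsh' k - zs' k)) * (1 + ε' k • zs' k)⁻¹ := by
      have hstep : Phat k - 1
          = ((1 + ε' k • zsh' k) - (1 + ε' k • zs' k)) * (1 + ε' k • zs' k)⁻¹ := by
        rw [sub_mul, mat_mul_inv_cancel hk]
      rw [hstep]
      congr 1
      rw [smul_sub]
      abel
    show (ε' k)⁻¹ • (Phat k - 1) = _
    rw [h1, smul_mul_assoc, smul_smul, inv_mul_cancel₀ (hε'pos k).ne', one_smul]
  have htendu : Tendsto u atTop (𝓝 (zh - z)) := by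
    have h2 : Tendsto (fun k => (zsh' k - zs' k) * (1 + ε' k • zs' k)⁻¹) atTop
        (𝓝 ((zh - z) * 1)) := (hzsh'.sub hzs').mul hinv
    rw [mul_one] at h2
    exact h2.congr' (huev.mono fun k hk => hk.symm)
  have htendw : Tendsto w atTop (𝓝 (zh - z)) := by
    rw [← tendsto_sub_nhds_zero_iff]
    apply squeeze_zero_norm'
    · filter_upwards [hζspec] with k hk
      have htri : ‖w k - (zh - z)‖ ≤ ‖w k - u k‖ + ‖u k - (zh - z)‖ := by
        have := dist_triangle (w k) (u k) (zh - z)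
        rwa [dist_eq_norm, dist_eq_norm, dist_eq_norm] at this
      have hstep1 : ‖w k - u k‖ ≤ (ε' k)⁻¹ * (Cd * (c k / c₄) ^ 2) := by
        have hwk : w k - u k = (ε' k)⁻¹ • (ζ k - (Phat k - 1)) := by
          show (ε' k)⁻¹ • ζ k - (ε' k)⁻¹ • (Phat k - 1) = _
          rw [← smul_sub]
        rw [hwk, norm_smul, Real.norm_eq_abs, abs_of_pos (inv_pos.mpr (hε'pos k))]
        apply mul_le_mul_of_nonneg_left _ (inv_pos.mpr (hε'pos k)).le
        have hneg : ζ k - (Phat k - 1) = -(Phat k - 1 - ζ k) := by abel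
        rw [hneg, norm_neg]
        exact hk.2.2
      calc ‖w k - (zh - z)‖ ≤ ‖w k - u k‖ + ‖u k - (zh - z)‖ := htri
        _ ≤ (ε' k)⁻¹ * (Cd * (c k / c₄) ^ 2) + ‖u k - (zh - z)‖ :=
            add_le_add_left hstep1 _
    · have h1 : Tendsto (fun k => (ε' k)⁻¹ * (Cd * (c k / c₄) ^ 2)) atTop (𝓝 0) := by
        have heq : ∀ k, (ε' k)⁻¹ * (Cd * (c k / c₄) ^ 2)
            = (Cd / c₄ ^ 2) * (ε' k * (B + ε' k) ^ 2) := by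
          intro k
          have h2 : ε' k ≠ 0 := (hε'pos k).ne'
          have h3 : c₄ ≠ 0 := hc₄.ne'
          have h1 : c k = ε' k * (B + ε' k) := rfl
          rw [h1]
          field_simp
        simp_rw [heq]
        have : Tendsto (fun k => ε' k * (B + ε' k) ^ 2) atTop (𝓝 (0 * (B + 0) ^ 2)) :=
          hε'0.mul ((tendsto_const_nhds.add hε'0).pow 2)
        rw [zero_mul] at this
        simpa using tendsto_const_nhds.mul this
      have h2 : Tendsto (fun k => ‖u k - (zh - z)‖) atTop (𝓝 0) := by
        rw [← tendsto_sub_nhds_zero_iff] at htendu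
        simpa using htendu.norm
      simpa using h1.add h2
  have hwdev : ∀ᶠ k in atTop, w k ∈ Dev d := by
    filter_upwards [hζspec] with k hk
    exact dev_smul hk.1 _
  have hdev : zh - z ∈ Dev d := isClosed_dev.mem_of_tendsto htendw hwdev
  have hRw : ∀ᶠ k in atTop, Rdev (w k) ≤ B + ε' k := by
    filter_upwards [hζspec] with k hk
    show Rdev ((ε' k)⁻¹ • ζ k) ≤ B + ε' k
    rw [hR.hom _ (inv_pos.mpr (hε'pos k)).le _ hk.1]
    calc (ε' k)⁻¹ * Rdev (ζ k) ≤ (ε' k)⁻¹ * c k :=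
          mul_le_mul_of_nonneg_left hk.2.1 (inv_pos.mpr (hε'pos k)).le
      _ = B + ε' k := inv_mul_cancel_left₀ (hε'pos k).ne' _
  have hRlim : Rdev (zh - z) ≤ B := by
    have hev : ∀ᶠ k in atTop, Rdev (zh - z) ≤ B + ε' k + c₅ * ‖zh - z - w k‖ := by
      filter_upwards [hRw, hwdev] with k h1 h2
      have := Rdev_lip hR hdev h2
      have h3 := abs_le.mp this
      linarith [h3.1, h3.2]
    have htr : Tendsto (fun k => B + ε' k + c₅ * ‖zh - z - w k‖) atTop (𝓝 (B + 0 + c₅ * 0)) := by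
      apply Tendsto.add
      · exact tendsto_const_nhds.add hε'0
      · apply Tendsto.const_mul
        have := (htendw.const_sub (zh - z)).norm
        simpa using this
    rw [add_zero, mul_zero, add_zero] at htr
    exact ge_of_tendsto htr hev
  have hfinal : Rext Rdev (zh - z) ≤ b := by
    rw [Rext_of_dev hdev, ← ENNReal.ofReal_toReal hbtop]
    exact ENNReal.ofReal_le_ofReal hRlim
  exact absurd (lt_of_lt_of_le hb2 hfinal) (lt_irrefl b)

end Aux34d

section MainThm

attribute [local instance] Matrix.frobeniusNormedRing Matrix.frobeniusNormedAlgebra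
attribute [-instance] instTopologicalSpaceMatrix Matrix.instUniformSpace

variable {d' : ℕ}

/-- Auxiliary: the limsup bound for the explicit recovery sequence, assuming only
that the difference is deviatoric. -/
lemma recovery_limsup {Rdev : Mat d' → ℝ} {c₄ c₅ : ℝ} (hR : DissAss d' Rdev c₄ c₅)
    (z : Mat d') {A : Mat d'} (hA : A ∈ Dev d') (ε : ℕ → ℝ)
    (hεpos : ∀ n, 0 < ε n) (hε0 : Tendsto ε atTop (𝓝 0)) :
    Filter.limsup (fun n => ENNReal.ofReal ((ε n)⁻¹) *
        DistD Rdev (1 + ε n • z)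
          (1 + ε n • ((ε n)⁻¹ • (mexp (ε n • A) * (1 + ε n • z) - 1)))) atTop
      ≤ ENNReal.ofReal (Rdev A) := by
  have hevsm : ∀ᶠ n in atTop, ‖ε n • z‖ < 1 := by
    have h1 : Tendsto (fun n => ε n • z) atTop (𝓝 (0 : Mat d')) := by
      have := hε0.smul (tendsto_const_nhds (x := z))
      rwa [zero_smul] at this
    have h2 : Tendsto (fun n => ‖ε n • z‖) atTop (𝓝 0) := by
      simpa [Function.comp_def] using (continuous_norm.tendsto (0 : Mat d')).comp h1
    exact h2.eventually_lt_const one_pos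
  apply Filter.limsup_le_of_le (by isBoundedDefault)
  filter_upwards [hevsm] with n hn
  have hD := DistD_recovery_le hR z hA (hεpos n) hn
  calc ENNReal.ofReal ((ε n)⁻¹) *
      DistD Rdev (1 + ε n • z)
        (1 + ε n • ((ε n)⁻¹ • (mexp (ε n • A) * (1 + ε n • z) - 1)))
      ≤ ENNReal.ofReal ((ε n)⁻¹) * ENNReal.ofReal (ε n * Rdev A) :=
        mul_le_mul_right hD _
    _ = ENNReal.ofReal ((ε n)⁻¹ * (ε n * Rdev A)) := by
        rw [← ENNReal.ofReal_mul (inv_pos.mpr (hεpos n)).le]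
    _ = ENNReal.ofReal (Rdev A) := by
        rw [inv_mul_cancel_left₀ (hεpos n).ne']

end MainThm


/-- **Lemma 3.4 (recovery sequence and Γ-convergence of the rescaled dissipation
distances).** For deviatoric `z,ẑ`, the explicit sequence
`ẑ_ε = ε⁻¹(exp(ε(ẑ−z))(I+εz) − I)` satisfies `ẑ_ε → ẑ` and
`limsup_{ε→0} ε⁻¹ D(I+εz, I+εẑ_ε) ≤ R(ẑ−z)`; consequently `D_ε` Γ-converges to
`D₀(z,ẑ) = R(ẑ−z)` on `ℝ^{d×d} × ℝ^{d×d}`. -/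
theorem dissipation_distance_recovery_and_Gamma_convergence
    {d : ℕ} (Rdev : Mat d → ℝ) (c₄ c₅ : ℝ) (hR : DissAss d Rdev c₄ c₅) :
    -- the explicit recovery sequence
    (∀ z ∈ Dev d, ∀ zh ∈ Dev d, ∀ ε : ℕ → ℝ,
      (∀ n, 0 < ε n) → Tendsto ε atTop (𝓝 0) →
      Tendsto (fun n => (ε n)⁻¹ • (mexp (ε n • (zh - z)) * (1 + ε n • z) - 1)) atTop
        (𝓝 zh) ∧
      Filter.limsup (fun n => ENNReal.ofReal ((ε n)⁻¹) *
          DistD Rdev (1 + ε n • z)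
            (1 + ε n • ((ε n)⁻¹ • (mexp (ε n • (zh - z)) * (1 + ε n • z) - 1)))) atTop
        ≤ ENNReal.ofReal (Rdev (zh - z))) ∧
    -- Γ-convergence of `D_ε` to `D₀` on `ℝ^{d×d} × ℝ^{d×d}`
    (∀ z zh : Mat d, ∀ ε : ℕ → ℝ, (∀ n, 0 < ε n) → Tendsto ε atTop (𝓝 0) →
      -- Γ-liminf inequality along arbitrary converging sequences …
      (∀ zs zsh : ℕ → Mat d,
        Tendsto zs atTop (𝓝 z) → Tendsto zsh atTop (𝓝 zh) →
        Rext Rdev (zh - z) ≤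
          Filter.liminf (fun n => ENNReal.ofReal ((ε n)⁻¹) *
            DistD Rdev (1 + ε n • zs n) (1 + ε n • zsh n)) atTop) ∧
      -- … and existence of a recovery sequence
      (∃ zs zsh : ℕ → Mat d,
        Tendsto zs atTop (𝓝 z) ∧ Tendsto zsh atTop (𝓝 zh) ∧
        Filter.limsup (fun n => ENNReal.ofReal ((ε n)⁻¹) *
            DistD Rdev (1 + ε n • zs n) (1 + ε n • zsh n)) atTop
          ≤ Rext Rdev (zh - z))) := by
  constructor
  · -- the explicit recovery sequence
    intro z hz zh hzh ε hεpos hε0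
    have hA : zh - z ∈ Dev d := dev_sub hzh hz
    constructor
    · have := recovery_tendsto z (zh - z) hεpos hε0
      rwa [sub_add_cancel] at this
    · exact recovery_limsup hR z hA ε hεpos hε0
  · -- Γ-convergence
    intro z zh ε hεpos hε0
    constructor
    · intro zs zsh hzs hzsh
      exact Gamma_liminf hR z zh ε hεpos hε0 zs zsh hzs hzsh
    · by_cases hdev : zh - z ∈ Dev d
      · refine ⟨fun _ => z,
          fun n => (ε n)⁻¹ • (mexp (ε n • (zh - z)) * (1 + ε n • z) - 1), tendsto_const_nhds,
          ?_, ?_⟩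
        · have := recovery_tendsto z (zh - z) hεpos hε0
          rwa [sub_add_cancel] at this
        · rw [Rext_of_dev hdev]
          exact recovery_limsup hR z hdev ε hεpos hε0
      · exact ⟨fun _ => z, fun _ => zh, tendsto_const_nhds, tendsto_const_nhds, by
          rw [Rext_of_not_dev hdev]; exact le_top⟩

end LinPlast
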